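/- Let I be an ideal on ℕ. The following are equivalent: (1) for every sequence (a_n) of positive reals that is nonincreasing on some set F ∈ I*, ∑ a_n < ∞ implies that (n·a_n) I*-converges to 0; (2) for every such sequence, ∑ a_n < ∞ implies (n·a_n) I-converges to 0; (3) for every X ∉ I, the ideal I_X is disjoint from the dual filter I*. -/

import Mathlib

open Filter Set

/-- For an infinite `X = {x₁ < x₂ < …} ⊆ ℕ`, `fX X i = 1 / xₙ` where `xₙ` is the least
element of `X` with `i ≤ xₙ` (equivalently, `i ∈ (x_{n-1}, xₙ]`, with `x₀ = 0`). -/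
noncomputable def fX (X : Set ℕ) (i : ℕ) : ℝ :=
  1 / (sInf {x | x ∈ X ∧ i ≤ x} : ℕ)

lemma fX_nonneg (X : Set ℕ) (i : ℕ) : 0 ≤ fX X i := by
  unfold fX; positivity

def Pone (I : Set (Set ℕ)) : Prop :=
  ∀ a : ℕ → ℝ, (∀ n, 0 < a n) →
    (∃ F : Set ℕ, Fᶜ ∈ I ∧ ∀ m ∈ F, ∀ n ∈ F, m ≤ n → a n ≤ a m) →
    Summable a →
    ∃ F : Set ℕ, Fᶜ ∈ I ∧
      ∀ ε > (0 : ℝ), ∃ k : ℕ, ∀ n ∈ F, k ≤ n → |(n : ℝ) * a n| < ε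

def Ptwo (I : Set (Set ℕ)) : Prop :=
  ∀ a : ℕ → ℝ, (∀ n, 0 < a n) →
    (∃ F : Set ℕ, Fᶜ ∈ I ∧ ∀ m ∈ F, ∀ n ∈ F, m ≤ n → a n ≤ a m) →
    Summable a →
    ∀ ε > (0 : ℝ), {n : ℕ | ε ≤ |(n : ℝ) * a n|} ∈ I

def Pthree (I : Set (Set ℕ)) : Prop :=
  ∀ X : Set ℕ, X ∉ I →
    ∀ A : Set ℕ, Summable (A.indicator (fX X)) → Aᶜ ∉ I

lemma imp12 (I : Set (Set ℕ))
    (hfin : ∀ A : Set ℕ, A.Finite → A ∈ I)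
    (hsub : ∀ A B : Set ℕ, A ⊆ B → B ∈ I → A ∈ I)
    (hunion : ∀ A B : Set ℕ, A ∈ I → B ∈ I → A ∪ B ∈ I) :
    Pone I → Ptwo I := by
  intro h1 a hpos hmono hsum ε hε
  obtain ⟨F, hFc, hconv⟩ := h1 a hpos hmono hsum
  obtain ⟨k, hk⟩ := hconv ε hε
  apply hsub _ (Fᶜ ∪ {n | n < k})
  · intro n hn
    by_cases hF : n ∈ F
    · right
      simp only [mem_setOf_eq]
      by_contra hcon
      push_neg at hcon
      exact absurd hn (not_le.mpr (hk n hF hcon))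
    · exact Or.inl hF
  · exact hunion _ _ hFc (hfin _ (Set.finite_lt_nat k))

lemma imp23 (I : Set (Set ℕ))
    (hfin : ∀ A : Set ℕ, A.Finite → A ∈ I)
    (hsub : ∀ A B : Set ℕ, A ⊆ B → B ∈ I → A ∈ I)
    (hunion : ∀ A B : Set ℕ, A ∈ I → B ∈ I → A ∪ B ∈ I) :
    Ptwo I → Pthree I := by
  classical
  intro h2 X hX A hA hAc
  have hXinf : X.Infinite := by
    by_contra hcon
    rw [Set.not_infinite] at hcon
    exact hX (hfin X hcon)
  have hne : ∀ n : ℕ, {x | x ∈ X ∧ n ≤ x}.Nonempty := by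
    intro n
    obtain ⟨b, hb, hb2⟩ := hXinf.exists_gt n
    exact ⟨b, hb, hb2.le⟩
  have hdge : ∀ n : ℕ, n ≤ sInf {x | x ∈ X ∧ n ≤ x} := fun n => (Nat.sInf_mem (hne n)).2
  set a : ℕ → ℝ := fun n => if n ∈ A ∧ 1 ≤ n then fX X n else (1/2)^n with ha
  have hpos : ∀ n, 0 < a n := by
    intro n
    simp only [ha]
    by_cases h : n ∈ A ∧ 1 ≤ n
    · rw [if_pos h]
      unfold fX
      have : 0 < sInf {x | x ∈ X ∧ n ≤ x} := lt_of_lt_of_le h.2 (hdge n)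
      have : (0:ℝ) < (sInf {x | x ∈ X ∧ n ≤ x} : ℕ) := by exact_mod_cast this
      positivity
    · rw [if_neg h]; positivity
  set F : Set ℕ := {n | n ∈ A ∧ 1 ≤ n} with hF
  have hFc : Fᶜ ∈ I := by
    apply hsub _ (Aᶜ ∪ {0}) _ (hunion _ _ hAc (hfin _ (Set.finite_singleton 0)))
    intro n hn
    simp only [hF, mem_compl_iff, mem_setOf_eq, not_and, not_le] at hn
    by_cases hnA : n ∈ A
    · right
      have := hn hnA
      simp only [mem_singleton_iff]
      omega
    · exact Or.inl hnA
  have hmono : ∀ m ∈ F, ∀ n ∈ F, m ≤ n → a n ≤ a m := by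
    intro m hm n hn hmn
    have hm' : m ∈ A ∧ 1 ≤ m := hm
    have hn' : n ∈ A ∧ 1 ≤ n := hn
    simp only [ha]
    rw [if_pos hm', if_pos hn']
    unfold fX
    have hsub' : {x | x ∈ X ∧ n ≤ x} ⊆ {x | x ∈ X ∧ m ≤ x} := by
      intro x hx; exact ⟨hx.1, le_trans hmn hx.2⟩
    have hle : sInf {x | x ∈ X ∧ m ≤ x} ≤ sInf {x | x ∈ X ∧ n ≤ x} :=
      Nat.sInf_le (hsub' (Nat.sInf_mem (hne n)))
    have hmpos : 0 < sInf {x | x ∈ X ∧ m ≤ x} := lt_of_lt_of_le hm'.2 (hdge m)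
    apply one_div_le_one_div_of_le
    · exact_mod_cast hmpos
    · exact_mod_cast hle
  have hbound : ∀ n, a n ≤ A.indicator (fX X) n + (1/2)^n := by
    intro n
    simp only [ha]
    by_cases h : n ∈ A ∧ 1 ≤ n
    · simp only [if_pos h, Set.indicator_of_mem h.1]
      have : (0:ℝ) ≤ (1/2)^n := by positivity
      linarith
    · simp only [if_neg h]
      have : (0:ℝ) ≤ A.indicator (fX X) n := Set.indicator_nonneg (fun m _ => fX_nonneg X m) n
      linarith
  have hsum : Summable a :=
    Summable.of_nonneg_of_le (fun n => (hpos n).le) hbound (hA.add summable_geometric_two)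
  have hS : {n : ℕ | (1:ℝ) ≤ |(n : ℝ) * a n|} ∈ I := h2 a hpos ⟨F, hFc, hmono⟩ hsum 1 one_pos
  have hXsub : X ⊆ {n : ℕ | (1:ℝ) ≤ |(n : ℝ) * a n|} ∪ (Aᶜ ∪ {0}) := by
    intro n hn
    by_cases h : n ∈ A ∧ 1 ≤ n
    · left
      simp only [mem_setOf_eq]
      have heq : sInf {x | x ∈ X ∧ n ≤ x} = n :=
        le_antisymm (Nat.sInf_le ⟨hn, le_refl n⟩) (hdge n)
      have han : a n = 1 / (n:ℝ) := by
        simp only [ha, if_pos h]; unfold fX; rw [heq]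
      rw [han]
      have hn0 : (n:ℝ) ≠ 0 := by
        have := h.2; positivity
      rw [mul_one_div, div_self hn0]
      simp
    · right
      rw [not_and_or, not_le] at h
      rcases h with h | h
      · exact Or.inl h
      · right; simp only [mem_singleton_iff]; omega
  exact hX (hsub _ _ hXsub (hunion _ _ hS (hunion _ _ hAc (hfin _ (Set.finite_singleton 0)))))

lemma imp31 (I : Set (Set ℕ))
    (hfin : ∀ A : Set ℕ, A.Finite → A ∈ I)
    (hsub : ∀ A B : Set ℕ, A ⊆ B → B ∈ I → A ∈ I)
    (hunion : ∀ A B : Set ℕ, A ∈ I → B ∈ I → A ∪ B ∈ I) :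
    Pthree I → Pone I := by
  classical
  rintro h3 a hpos ⟨F, hFc, hmono⟩ hsum
  set g : ℕ → ℝ := F.indicator a with hg
  have hgsum : Summable g := hsum.indicator F
  have hgnn : ∀ n, 0 ≤ g n := fun n => Set.indicator_nonneg (fun m _ => (hpos m).le) n
  set r : ℕ → ℝ := fun m => ∑' k, g (k + m) with hr
  have hrtend : Tendsto r atTop (nhds 0) := tendsto_sum_nat_add g
  have hrnn : ∀ m, 0 ≤ r m := fun m => tsum_nonneg (fun k => hgnn _)
  have hIco : ∀ m N : ℕ, ∑ i ∈ Finset.Ico m N, g i ≤ r m := by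
    intro m N
    rw [Finset.sum_Ico_eq_sum_range]
    have he : ∀ k, g (m + k) = g (k + m) := fun k => by rw [Nat.add_comm]
    rw [Finset.sum_congr rfl (fun k _ => he k)]
    exact Summable.sum_le_tsum _ (fun i _ => hgnn _) ((summable_nat_add_iff m).mpr hgsum)
  set T : ℕ → Set ℕ := fun k => {n | n ∈ F ∧ 1 / ((k:ℝ)+1) ≤ (n:ℝ) * a n} with hT
  have hTmono : ∀ {k k' : ℕ}, k ≤ k' → T k ⊆ T k' := by
    intro k k' hkk n hn
    refine ⟨hn.1, le_trans ?_ hn.2⟩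
    apply one_div_le_one_div_of_le
    · positivity
    · have : (k:ℝ) ≤ (k':ℝ) := Nat.cast_le.mpr hkk
      linarith
  by_cases hall : ∀ k, (T k).Finite
  · refine ⟨F, hFc, ?_⟩
    intro ε hε
    obtain ⟨k, hk⟩ := exists_nat_one_div_lt hε
    obtain ⟨m, hm⟩ := (hall k).bddAbove
    refine ⟨m+1, fun n hnF hn => ?_⟩
    rw [abs_of_nonneg (mul_nonneg (Nat.cast_nonneg n) (hpos n).le)]
    by_contra hcon
    push_neg at hcon
    have hnT : n ∈ T k := ⟨hnF, le_trans hk.le hcon⟩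
    have := hm hnT
    omega
  · push_neg at hall
    obtain ⟨K, hK⟩ := hall
    have hKinf : (T K).Infinite := hK
    have hstep : ∀ (j m : ℕ), ∃ q, m < q ∧ q ∈ T (K + j) ∧
        r (q+1) ≤ (1/2)^j / ((K:ℝ) + (j:ℝ) + 1) := by
      intro j m
      have hc : (0:ℝ) < (1/2)^j / ((K:ℝ) + (j:ℝ) + 1) := by positivity
      have hev : ∀ᶠ i in atTop, r i < (1/2)^j / ((K:ℝ) + (j:ℝ) + 1) :=
        hrtend.eventually (gt_mem_nhds hc)
      obtain ⟨M, hM⟩ := eventually_atTop.mp hev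
      obtain ⟨q, hqT, hq⟩ := (hKinf.mono (hTmono (Nat.le_add_right K j))).exists_gt (max m M)
      refine ⟨q, lt_of_le_of_lt (le_max_left m M) hq, hqT, ?_⟩
      have hMq : M < q := lt_of_le_of_lt (le_max_right m M) hq
      exact (hM (q+1) (by omega)).le
    choose next hnext1 hnext2 hnext3 using hstep
    set p : ℕ → ℕ := fun j => Nat.rec (next 0 0) (fun j pj => next (j+1) pj) j with hp
    have hp0 : p 0 = next 0 0 := rfl
    have hpsucc : ∀ j, p (j+1) = next (j+1) (p j) := fun j => rfl
    have hpmono : StrictMono p := by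
      apply strictMono_nat_of_lt_succ
      intro j
      rw [hpsucc j]
      exact hnext1 (j+1) (p j)
    have hpT : ∀ j, p j ∈ T (K + j) := by
      intro j
      cases j with
      | zero => exact hnext2 0 0
      | succ j => rw [hpsucc j]; exact hnext2 (j+1) (p j)
    have hpr : ∀ j, r (p j + 1) ≤ (1/2)^j / ((K:ℝ) + (j:ℝ) + 1) := by
      intro j
      cases j with
      | zero => exact hnext3 0 0
      | succ j => rw [hpsucc j]; exact hnext3 (j+1) (p j)
    have hzne : ∀ n : ℕ, {j | n ≤ p j}.Nonempty := fun n => ⟨n, hpmono.le_apply⟩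
    set z : ℕ → ℕ := fun n => sInf {j | n ≤ p j} with hz
    have hzle : ∀ n, n ≤ p (z n) := fun n => Nat.sInf_mem (hzne n)
    have hzmin : ∀ n j, n ≤ p j → z n ≤ j := fun n j h => Nat.sInf_le h
    have hzmono : ∀ {m n : ℕ}, m ≤ n → z m ≤ z n :=
      fun {m n} h => hzmin _ _ (le_trans h (hzle n))
    have hzp : ∀ j, z (p j) = j := by
      intro j
      exact le_antisymm (hzmin _ _ le_rfl) (hpmono.le_iff_le.mp (hzle (p j)))
    set X : Set ℕ := {n | n ∈ T (K + z n)} with hXdef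
    have hpX : ∀ j, p j ∈ X := by
      intro j
      show p j ∈ T (K + z (p j))
      rw [hzp j]
      exact hpT j
    have hnonemp : ∀ n : ℕ, {x | x ∈ X ∧ n ≤ x}.Nonempty :=
      fun n => ⟨p (z n), hpX _, hzle n⟩
    -- key pointwise estimate
    have hkey : ∀ n ∈ F, fX X n ≤ ((K:ℝ) + (z n : ℝ) + 1) * a n := by
      intro n hnF
      set d := sInf {x | x ∈ X ∧ n ≤ x} with hd
      obtain ⟨hdX, hnd⟩ := Nat.sInf_mem (hnonemp n)
      rw [← hd] at hdX hnd
      have hdle : d ≤ p (z n) := by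
        rw [hd]; exact Nat.sInf_le ⟨hpX _, hzle n⟩
      have hzd : z d = z n := by
        apply le_antisymm
        · calc z d ≤ z (p (z n)) := hzmono hdle
            _ = z n := hzp _
        · exact hzmono hnd
      have hdT : d ∈ T (K + z n) := by
        have : d ∈ T (K + z d) := hdX
        rwa [hzd] at this
      obtain ⟨hdF, hdth⟩ := hdT
      have hth : 1 / ((K:ℝ) + (z n : ℝ) + 1) ≤ (d:ℝ) * a d := by
        have : ((K + z n : ℕ) : ℝ) = (K:ℝ) + (z n : ℝ) := by push_cast; ring
        rwa [this] at hdth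
      have hc : (0:ℝ) < (K:ℝ) + (z n : ℝ) + 1 := by positivity
      have hdpos : 0 < d := by
        by_contra hcon
        push_neg at hcon
        interval_cases d
        simp only [Nat.cast_zero, zero_mul] at hth
        have : (0:ℝ) < 1 / ((K:ℝ) + (z n : ℝ) + 1) := by positivity
        linarith
      have hdR : (0:ℝ) < (d:ℝ) := by exact_mod_cast hdpos
      have hadan : a d ≤ a n := hmono n hnF d hdF hnd
      have h2 : 1 / ((K:ℝ) + (z n : ℝ) + 1) ≤ (d:ℝ) * a n :=
        le_trans hth (mul_le_mul_of_nonneg_left hadan hdR.le)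
      show (1:ℝ) / ((d:ℕ):ℝ) ≤ _
      rw [div_le_iff₀ hdR]
      rw [div_le_iff₀ hc] at h2
      nlinarith
    -- comparison function and partial sums
    set h : ℕ → ℝ := F.indicator (fun n => ((K:ℝ) + (z n : ℝ) + 1) * a n) with hh
    have hhnn : ∀ n, 0 ≤ h n :=
      fun n => Set.indicator_nonneg (fun m _ => mul_nonneg (by positivity) (hpos m).le) n
    have hzone : ∀ j N, N ≤ p j + 1 →
        ∑ i ∈ Finset.range N, h i ≤ ((K:ℝ)+1) * r 0 + ∑ t ∈ Finset.range j, 4 * (1/2)^t := by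
      intro j
      induction j with
      | zero =>
        intro N hN
        simp only [Finset.range_zero, Finset.sum_empty, add_zero]
        have hb : ∀ i ∈ Finset.range N, h i ≤ ((K:ℝ)+1) * g i := by
          intro i hi
          simp only [Finset.mem_range] at hi
          have hiz : z i = 0 := Nat.le_zero.mp (hzmin i 0 (by omega))
          by_cases hiF : i ∈ F
          · rw [hh, Set.indicator_of_mem hiF, hg, Set.indicator_of_mem hiF, hiz]
            simp
          · rw [hh, Set.indicator_of_notMem hiF, hg, Set.indicator_of_notMem hiF, mul_zero]
        calc ∑ i ∈ Finset.range N, h i ≤ ∑ i ∈ Finset.range N, ((K:ℝ)+1) * g i :=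
              Finset.sum_le_sum hb
          _ = ((K:ℝ)+1) * ∑ i ∈ Finset.range N, g i := by rw [Finset.mul_sum]
          _ ≤ ((K:ℝ)+1) * r 0 := by
              have hKnn : (0:ℝ) ≤ (K:ℝ)+1 := by positivity
              apply mul_le_mul_of_nonneg_left _ hKnn
              have := hIco 0 N
              rwa [← Finset.range_eq_Ico] at this
      | succ j ih =>
        intro N hN
        by_cases hN' : N ≤ p j + 1
        · refine le_trans (ih N hN') ?_
          rw [Finset.sum_range_succ]
          have : (0:ℝ) ≤ 4*(1/2:ℝ)^j := by positivity
          linarith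
        · push_neg at hN'
          have hsplit : ∑ i ∈ Finset.range (p j + 1), h i + ∑ i ∈ Finset.Ico (p j + 1) N, h i
              = ∑ i ∈ Finset.range N, h i := by
            rw [Finset.range_eq_Ico, Finset.range_eq_Ico]
            exact Finset.sum_Ico_consecutive h (Nat.zero_le _) hN'.le
          have hmid : ∑ i ∈ Finset.Ico (p j + 1) N, h i ≤ 4 * (1/2)^j := by
            have hb : ∀ i ∈ Finset.Ico (p j + 1) N, h i ≤ ((K:ℝ)+(j:ℝ)+2) * g i := by
              intro i hi
              simp only [Finset.mem_Ico] at hi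
              have hzi1 : z i ≤ j + 1 := hzmin _ _ (by omega)
              have hzi2 : j + 1 ≤ z i := by
                by_contra hcon
                push_neg at hcon
                have h1 : p (z i) ≤ p j := hpmono.monotone (by omega)
                have h2 := hzle i
                omega
              have hzi : z i = j + 1 := le_antisymm hzi1 hzi2
              by_cases hiF : i ∈ F
              · rw [hh, Set.indicator_of_mem hiF, hg, Set.indicator_of_mem hiF, hzi]
                push_cast
                apply le_of_eq
                ring
              · rw [hh, Set.indicator_of_notMem hiF, hg, Set.indicator_of_notMem hiF, mul_zero]
            have hKj : (0:ℝ) < (K:ℝ)+(j:ℝ)+1 := by positivity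
            calc ∑ i ∈ Finset.Ico (p j + 1) N, h i
                ≤ ∑ i ∈ Finset.Ico (p j + 1) N, ((K:ℝ)+(j:ℝ)+2) * g i := Finset.sum_le_sum hb
              _ = ((K:ℝ)+(j:ℝ)+2) * ∑ i ∈ Finset.Ico (p j + 1) N, g i := by rw [Finset.mul_sum]
              _ ≤ ((K:ℝ)+(j:ℝ)+2) * r (p j + 1) := by
                  have hKnn : (0:ℝ) ≤ (K:ℝ)+(j:ℝ)+2 := by positivity
                  exact mul_le_mul_of_nonneg_left (hIco _ _) hKnn
              _ ≤ ((K:ℝ)+(j:ℝ)+2) * ((1/2)^j / ((K:ℝ) + (j:ℝ) + 1)) := by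
                  apply mul_le_mul_of_nonneg_left (hpr j) (by positivity)
              _ = (((K:ℝ)+(j:ℝ)+2) / ((K:ℝ)+(j:ℝ)+1)) * (1/2)^j := by ring
              _ ≤ 4 * (1/2)^j := by
                  apply mul_le_mul_of_nonneg_right _ (by positivity)
                  rw [div_le_iff₀ hKj]
                  have hK0 : (0:ℝ) ≤ (K:ℝ) := Nat.cast_nonneg K
                  have hj0 : (0:ℝ) ≤ (j:ℝ) := Nat.cast_nonneg j
                  linarith
          have hgeo : ∑ t ∈ Finset.range (j+1), 4*(1/2:ℝ)^t
              = ∑ t ∈ Finset.range j, 4*(1/2:ℝ)^t + 4*(1/2:ℝ)^j := Finset.sum_range_succ _ j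
          rw [← hsplit, hgeo]
          have := ih (p j + 1) le_rfl
          linarith
    have hbound : ∀ N, ∑ i ∈ Finset.range N, h i ≤ ((K:ℝ)+1) * r 0 + 8 := by
      intro N
      have hNp : N ≤ p N + 1 := by
        have := hpmono.le_apply (x := N)
        omega
      refine le_trans (hzone N N hNp) ?_
      have h4 : ∑ t ∈ Finset.range N, 4 * (1/2:ℝ)^t = 4 * ∑ t ∈ Finset.range N, (1/2:ℝ)^t := by
        rw [Finset.mul_sum]
      have hg8 : ∑ t ∈ Finset.range N, (1/2:ℝ)^t ≤ 2 := sum_geometric_two_le N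
      rw [h4] at *
      linarith
    have hhsum : Summable h := summable_of_sum_range_le hhnn hbound
    have hfsum : Summable (F.indicator (fX X)) := by
      apply Summable.of_nonneg_of_le
        (fun n => Set.indicator_nonneg (fun m _ => fX_nonneg X m) n) _ hhsum
      intro n
      by_cases hnF : n ∈ F
      · rw [Set.indicator_of_mem hnF, hh, Set.indicator_of_mem hnF]
        exact hkey n hnF
      · rw [Set.indicator_of_notMem hnF]
        exact hhnn n
    have hXI : X ∈ I := by
      by_contra hX
      exact h3 X hX F hfsum hFc
    refine ⟨F \ X, ?_, ?_⟩
    · have hceq : (F \ X)ᶜ = Fᶜ ∪ X := by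
        rw [Set.diff_eq, Set.compl_inter, compl_compl]
      rw [hceq]
      exact hunion _ _ hFc hXI
    · intro ε hε
      obtain ⟨j, hj⟩ := exists_nat_one_div_lt hε
      refine ⟨p j + 1, fun n hn hpn => ?_⟩
      obtain ⟨hnF, hnX⟩ := hn
      rw [abs_of_nonneg (mul_nonneg (Nat.cast_nonneg n) (hpos n).le)]
      have hzj : j + 1 ≤ z n := by
        by_contra hcon
        push_neg at hcon
        have h1 : p (z n) ≤ p j := hpmono.monotone (by omega)
        have h2 := hzle n
        omega
      have hnT : ¬ (1 / (((K + z n : ℕ) : ℝ) + 1) ≤ (n:ℝ) * a n) := by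
        intro hc
        exact hnX ⟨hnF, hc⟩
      push_neg at hnT
      have hle : 1 / (((K + z n : ℕ) : ℝ) + 1) ≤ 1 / ((j:ℝ) + 1) := by
        apply one_div_le_one_div_of_le (by positivity)
        have : (j:ℝ) + 1 ≤ ((z n : ℕ):ℝ) := by exact_mod_cast hzj
        have hK0 : (0:ℝ) ≤ (K:ℝ) := Nat.cast_nonneg K
        push_cast
        push_cast at this
        linarith
      linarith

/-- Characterization of ideals for which Olivier's theorem holds for `I^*`-nonincreasing
sequences: conditions (1) (`I^*`-convergence), (2) (`I`-convergence) and
(3) (`I_X ∩ I^* = ∅` for every `X ∉ I`) are equivalent. -/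
theorem star_ideal_test (I : Set (Set ℕ))
    (hfin : ∀ A : Set ℕ, A.Finite → A ∈ I)
    (hsub : ∀ A B : Set ℕ, A ⊆ B → B ∈ I → A ∈ I)
    (hunion : ∀ A B : Set ℕ, A ∈ I → B ∈ I → A ∪ B ∈ I)
    (huniv : (Set.univ : Set ℕ) ∉ I) :
    ((∀ a : ℕ → ℝ, (∀ n, 0 < a n) →
        (∃ F : Set ℕ, Fᶜ ∈ I ∧ ∀ m ∈ F, ∀ n ∈ F, m ≤ n → a n ≤ a m) →
        Summable a →
        ∃ F : Set ℕ, Fᶜ ∈ I ∧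
          ∀ ε > (0 : ℝ), ∃ k : ℕ, ∀ n ∈ F, k ≤ n → |(n : ℝ) * a n| < ε) ↔
      (∀ a : ℕ → ℝ, (∀ n, 0 < a n) →
        (∃ F : Set ℕ, Fᶜ ∈ I ∧ ∀ m ∈ F, ∀ n ∈ F, m ≤ n → a n ≤ a m) →
        Summable a →
        ∀ ε > (0 : ℝ), {n : ℕ | ε ≤ |(n : ℝ) * a n|} ∈ I)) ∧
    ((∀ a : ℕ → ℝ, (∀ n, 0 < a n) →
        (∃ F : Set ℕ, Fᶜ ∈ I ∧ ∀ m ∈ F, ∀ n ∈ F, m ≤ n → a n ≤ a m) →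
        Summable a →
        ∀ ε > (0 : ℝ), {n : ℕ | ε ≤ |(n : ℝ) * a n|} ∈ I) ↔
      (∀ X : Set ℕ, X ∉ I →
        ∀ A : Set ℕ, Summable (A.indicator (fX X)) → Aᶜ ∉ I)) := by
  have h12 : Pone I → Ptwo I := imp12 I hfin hsub hunion
  have h23 : Ptwo I → Pthree I := imp23 I hfin hsub hunion
  have h31 : Pthree I → Pone I := imp31 I hfin hsub hunion
  exact ⟨⟨fun h1 => h12 h1, fun h2 => h31 (h23 h2)⟩,
         ⟨fun h2 => h23 h2, fun h3 => h12 (h31 h3)⟩⟩
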